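/- For every positive integer ℓ, Σ_{d=1}^{∞} gcd(d,ℓ)/d² = (ζ(2)/ℓ²) · Σ_{d | ℓ} d² · φ(ℓ/d), where φ is Euler's totient function. -/

import Mathlib

open Finset

lemma basel_succ : HasSum (fun k : ℕ => (1 : ℝ) / ((k + 1 : ℕ) : ℝ) ^ 2) (Real.pi ^ 2 / 6) := by
  have h := hasSum_zeta_two
  rw [← hasSum_nat_add_iff' 1] at h
  simpa using h

lemma my_inner_sum (e : ℕ) (he : 0 < e) (c : ℝ) :
    HasSum (fun d : ℕ => if e ∣ (d + 1) then c / ((d + 1 : ℕ) : ℝ) ^ 2 else 0)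
      (c / (e : ℝ) ^ 2 * (Real.pi ^ 2 / 6)) := by
  have hg : Function.Injective (fun k : ℕ => e * (k + 1) - 1) := by
    intro a b hab
    simp only at hab
    have ha : e * (a + 1) - 1 + 1 = e * (a + 1) :=
      Nat.succ_pred_eq_of_pos (Nat.mul_pos he (Nat.succ_pos _))
    have hb : e * (b + 1) - 1 + 1 = e * (b + 1) :=
      Nat.succ_pred_eq_of_pos (Nat.mul_pos he (Nat.succ_pos _))
    have h2 : e * (a + 1) = e * (b + 1) := by omega
    have := Nat.eq_of_mul_eq_mul_left he h2
    omega
  rw [← Function.Injective.hasSum_iff hg]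
  · have key : ((fun d : ℕ => if e ∣ (d + 1) then c / ((d + 1 : ℕ) : ℝ) ^ 2 else 0) ∘
        (fun k : ℕ => e * (k + 1) - 1))
        = fun k : ℕ => (c / (e : ℝ) ^ 2) * ((1 : ℝ) / ((k + 1 : ℕ) : ℝ) ^ 2) := by
      funext k
      simp only [Function.comp]
      have h1 : e * (k + 1) - 1 + 1 = e * (k + 1) :=
        Nat.succ_pred_eq_of_pos (Nat.mul_pos he (Nat.succ_pos _))
      rw [h1, if_pos ⟨k + 1, rfl⟩]
      push_cast
      rw [mul_pow, div_mul_div_comm, mul_one]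
    rw [key]
    exact basel_succ.mul_left (c / (e : ℝ) ^ 2)
  · intro d hd
    simp only [Set.mem_range, not_exists] at hd
    by_contra h
    have hdvd : e ∣ (d + 1) := by
      by_contra h'; exact h (if_neg h')
    obtain ⟨m, hm⟩ := hdvd
    have hm1 : 0 < m := by
      rcases Nat.eq_zero_or_pos m with h0 | h0
      · rw [h0, Nat.mul_zero] at hm; omega
      · exact h0
    refine hd (m - 1) ?_
    have h3 : m - 1 + 1 = m := by omega
    rw [h3]
    omega

lemma gcd_eq (l : ℕ) (hl : 0 < l) (n : ℕ) (hn : 0 < n) :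
    (Nat.gcd n l : ℝ) = ∑ e ∈ l.divisors, (if e ∣ n then (Nat.totient e : ℝ) else 0) := by
  have h1 : Nat.gcd n l = ∑ e ∈ (Nat.gcd n l).divisors, Nat.totient e :=
    (Nat.sum_totient _).symm
  have h2 : (Nat.gcd n l).divisors = l.divisors.filter (· ∣ n) := by
    ext e
    simp only [Nat.mem_divisors, mem_filter]
    constructor
    · rintro ⟨he, _⟩
      exact ⟨⟨he.trans (Nat.gcd_dvd_right _ _), hl.ne'⟩, he.trans (Nat.gcd_dvd_left _ _)⟩
    · rintro ⟨⟨hel, _⟩, hen⟩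
      exact ⟨Nat.dvd_gcd hen hel, Nat.gcd_ne_zero_right hl.ne'⟩
  rw [h1, h2]
  push_cast [Finset.sum_filter]
  rfl

/-- `∑_{d=1}^{∞} gcd(d,ℓ)/d² = (ζ(2)/ℓ²) · ∑_{d ∣ ℓ} d²·φ(ℓ/d)`, where `ζ(2) = π²/6`. -/
theorem cc_eq_totient_sum (l : ℕ) (hl : 0 < l) :
    (∑' d : ℕ, (Nat.gcd (d + 1) l : ℝ) / ((d + 1 : ℕ) ^ 2)) =
      (Real.pi ^ 2 / 6) / (l : ℝ) ^ 2 *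
        ∑ d ∈ l.divisors, (d : ℝ) ^ 2 * (Nat.totient (l / d) : ℝ) := by
  have hsum : HasSum (fun d : ℕ => (Nat.gcd (d + 1) l : ℝ) / ((d + 1 : ℕ) : ℝ) ^ 2)
      (∑ e ∈ l.divisors, (Nat.totient e : ℝ) / (e : ℝ) ^ 2 * (Real.pi ^ 2 / 6)) := by
    have := hasSum_sum (s := l.divisors)
      (f := fun e d => if e ∣ (d + 1) then (Nat.totient e : ℝ) / ((d + 1 : ℕ) : ℝ) ^ 2 else 0)
      (a := fun e => (Nat.totient e : ℝ) / (e : ℝ) ^ 2 * (Real.pi ^ 2 / 6))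
      (fun e he => my_inner_sum e (Nat.pos_of_mem_divisors he) _)
    convert this using 1
    funext d
    rw [gcd_eq l hl (d + 1) (Nat.succ_pos d), Finset.sum_div]
    congr 1
    funext e
    split_ifs with h <;> simp [h]
  rw [hsum.tsum_eq]
  rw [show ∑ d ∈ l.divisors, (d : ℝ) ^ 2 * (Nat.totient (l / d) : ℝ)
      = ∑ e ∈ l.divisors, ((l / e : ℕ) : ℝ) ^ 2 * (Nat.totient e : ℝ) from by
    rw [← Nat.sum_div_divisors l (fun e => ((l / e : ℕ) : ℝ) ^ 2 * (Nat.totient e : ℝ))]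
    refine Finset.sum_congr rfl fun d hd => ?_
    rw [Nat.div_div_self (Nat.mem_divisors.mp hd).1 hl.ne']]
  rw [Finset.mul_sum]
  refine Finset.sum_congr rfl fun e he => ?_
  obtain ⟨hel, _⟩ := Nat.mem_divisors.mp he
  have he0 : (e : ℝ) ≠ 0 := Nat.cast_ne_zero.mpr (Nat.pos_of_mem_divisors he).ne'
  have hl0 : (l : ℝ) ≠ 0 := Nat.cast_ne_zero.mpr hl.ne'
  have hcast : ((l / e : ℕ) : ℝ) = (l : ℝ) / (e : ℝ) := Nat.cast_div hel he0
  rw [hcast]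
  field_simp
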